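/- If C_* is an exact (acyclic) complex of projective kH-modules in nonnegative degrees, then the resolution module M(C_*, ∞) is a projective kG-module; equivalently, M(C_*, ∞) is zero in the stable module category of kG. -/

import Mathlib

open MonoidAlgebra

section SumHelpers

theorem sum_two_terms {β : Type*} [AddCommGroup β] (n i₁ i₂ : ℕ) (h1 : i₁ < n) (h2 : i₂ < n)
    (hne : i₁ ≠ i₂) (f : ℕ → β) (X₁ X₂ : β)
    (hf : ∀ i < n, f i = (if i = i₁ then X₁ else 0) + (if i = i₂ then X₂ else 0)) :
    ∑ i ∈ Finset.range n, f i = X₁ + X₂ := by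
  rw [Finset.sum_congr rfl (fun i hi => hf i (Finset.mem_range.mp hi)),
    Finset.sum_add_distrib]
  rw [Finset.sum_ite_eq' (Finset.range n) i₁ (fun _ => X₁),
    Finset.sum_ite_eq' (Finset.range n) i₂ (fun _ => X₂)]
  rw [if_pos (Finset.mem_range.mpr h1), if_pos (Finset.mem_range.mpr h2)]

theorem sum_one_term {β : Type*} [AddCommGroup β] (n i₁ : ℕ) (h1 : i₁ < n)
    (f : ℕ → β) (X₁ : β)
    (hf : ∀ i < n, f i = if i = i₁ then X₁ else 0) :
    ∑ i ∈ Finset.range n, f i = X₁ := by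
  rw [Finset.sum_congr rfl (fun i hi => hf i (Finset.mem_range.mp hi)),
    Finset.sum_ite_eq' (Finset.range n) i₁ (fun _ => X₁), if_pos (Finset.mem_range.mpr h1)]

end SumHelpers

section Homotopy
variable {R : Type} [Ring R] (C : ℕ → Type) [∀ i, AddCommGroup (C i)] [∀ i, Module R (C i)]
  (d : ∀ i, C (i + 1) →ₗ[R] C i)

/-- Recursive construction of a contracting homotopy for an exact complex of
projective modules. At stage `n` we carry `h n` and `h (n+1)` with the homotopy identity. -/
noncomputable def htpyF
    (key : ∀ (n : ℕ) (g : C (n + 1) →ₗ[R] C (n + 1)), (∀ x, d n (g x) = 0) →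
      ∃ c : C (n + 1) →ₗ[R] C (n + 2), ∀ x, d (n + 1) (c x) = g x)
    (hdd : ∀ (n : ℕ) (x : C (n + 2)), d n (d (n + 1) x) = 0)
    (h0 : C 0 →ₗ[R] C 1) (hh0 : ∀ x, d 0 (h0 x) = x) :
    ∀ n : ℕ, Σ' (a : C n →ₗ[R] C (n + 1)) (b : C (n + 1) →ₗ[R] C (n + 2)),
      ∀ x, d (n + 1) (b x) + a (d n x) = x
  | 0 =>
    ⟨h0, (key 0 (LinearMap.id - h0 ∘ₗ d 0) (fun x => by simp [hh0])).choose,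
      fun x => by
        have := (key 0 (LinearMap.id - h0 ∘ₗ d 0) (fun x => by simp [hh0])).choose_spec x
        simp only [LinearMap.sub_apply, LinearMap.id_apply, LinearMap.comp_apply] at this
        rw [this]; abel⟩
  | (n + 1) =>
    let prev := htpyF key hdd h0 hh0 n
    let g : C (n + 2) →ₗ[R] C (n + 2) := LinearMap.id - prev.2.1 ∘ₗ d (n + 1)
    let pf : ∀ x : C (n + 2), d (n + 1) (g x) = 0 :=
      fun x => by
        have h1 := prev.2.2 (d (n + 1) x)
        have h2 := hdd n x
        rw [h2] at h1; simp only [map_zero, add_zero] at h1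
        show d (n + 1) (x - prev.2.1 (d (n + 1) x)) = 0
        rw [map_sub, h1]; simp
    ⟨prev.2.1, (key (n + 1) g pf).choose,
      fun x => by
        have := (key (n + 1) g pf).choose_spec x
        show d (n + 1 + 1) ((key (n + 1) g pf).choose x) + prev.2.1 (d (n + 1) x) = x
        simp only [g, LinearMap.sub_apply, LinearMap.id_apply, LinearMap.comp_apply] at this
        rw [this]; abel⟩

theorem exists_homotopy
    (hproj : ∀ i, Module.Projective R (C i))
    (hexact : ∀ i, LinearMap.range (d (i + 1)) = LinearMap.ker (d i))
    (hexact0 : Function.Surjective (d 0)) :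
    ∃ h : ∀ i, C i →ₗ[R] C (i + 1), (∀ x, d 0 (h 0 x) = x) ∧
      ∀ i x, d (i + 1) (h (i + 1) x) + h i (d i x) = x := by
  have hdd : ∀ (n : ℕ) (x : C (n + 2)), d n (d (n + 1) x) = 0 := by
    intro n x
    have : d (n + 1) x ∈ LinearMap.range (d (n + 1)) := ⟨x, rfl⟩
    rw [hexact n] at this
    exact this
  have key : ∀ (n : ℕ) (g : C (n + 1) →ₗ[R] C (n + 1)), (∀ x, d n (g x) = 0) →
      ∃ c : C (n + 1) →ₗ[R] C (n + 2), ∀ x, d (n + 1) (c x) = g x := by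
    intro n g hg
    have hmem : ∀ x, d (n + 1) x ∈ LinearMap.ker (d n) := by
      intro x
      rw [← hexact n]; exact ⟨x, rfl⟩
    set f : C (n + 2) →ₗ[R] LinearMap.ker (d n) :=
      (d (n + 1)).codRestrict (LinearMap.ker (d n)) hmem with hf
    have hfsur : Function.Surjective f := by
      rintro ⟨y, hy⟩
      rw [← hexact n] at hy
      obtain ⟨x, hx⟩ := hy
      exact ⟨x, Subtype.ext hx⟩
    have hgmem : ∀ x, g x ∈ LinearMap.ker (d n) := fun x => hg x
    obtain ⟨c, hc⟩ := Module.projective_lifting_property f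
      (g.codRestrict (LinearMap.ker (d n)) hgmem) hfsur
    exact ⟨c, fun x => congrArg Subtype.val (LinearMap.congr_fun hc x)⟩
  obtain ⟨h0, hh0'⟩ := Module.projective_lifting_property (d 0) LinearMap.id hexact0
  have hh0 : ∀ x, d 0 (h0 x) = x := fun x => LinearMap.congr_fun hh0' x
  have h0eq : (htpyF C d key hdd h0 hh0 0).1 = h0 := by rw [htpyF]
  have hsucc : ∀ n, (htpyF C d key hdd h0 hh0 (n + 1)).1 = (htpyF C d key hdd h0 hh0 n).2.1 := by
    intro n; rw [htpyF]
  refine ⟨fun i => (htpyF C d key hdd h0 hh0 i).1, fun x => ?_, fun i x => ?_⟩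
  · show d 0 ((htpyF C d key hdd h0 hh0 0).1 x) = x
    rw [h0eq]; exact hh0 x
  · show d (i + 1) ((htpyF C d key hdd h0 hh0 (i + 1)).1 x)
      + (htpyF C d key hdd h0 hh0 i).1 (d i x) = x
    rw [hsucc]
    exact (htpyF C d key hdd h0 hh0 i).2.2 x

end Homotopy

set_option maxHeartbeats 2000000 in
/-- If `C_*` is an exact (acyclic) complex of projective `kH`-modules in
nonnegative degrees, then the resolution module `M = M(C_*, ∞)` is a projective
`kG`-module, where `kG = kH ⊗ k[Z]/(Z^p)` (equivalently, `M(C_*, ∞)` is zero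
in the stable module category of `kG`). -/
theorem resolution_module_of_exact_projective_complex_is_projective
    (k : Type) [Field k] (p : ℕ) (hp : p.Prime) [CharP k p]
    (H : Type) [Group H] [Finite H]
    (C : ℕ → Type) [∀ i, AddCommGroup (C i)] [∀ i, Module (MonoidAlgebra k H) (C i)]
    (d : ∀ i, C (i + 1) →ₗ[MonoidAlgebra k H] C i)
    (hproj : ∀ i, Module.Projective (MonoidAlgebra k H) (C i))
    -- exactness of `⋯ → C_2 → C_1 → C_0 → 0`
    (hexact : ∀ i, LinearMap.range (d (i + 1)) = LinearMap.ker (d i))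
    (hexact0 : Function.Surjective (d 0))
    (M : Type) [AddCommGroup M]
    [Module (MonoidAlgebra (MonoidAlgebra k H) (Multiplicative (ZMod p))) M]
    [Module (MonoidAlgebra k H) M]
    [IsScalarTower (MonoidAlgebra k H)
      (MonoidAlgebra (MonoidAlgebra k H) (Multiplicative (ZMod p))) M]
    (ιe : (j : ℕ) → (C (2 * j) →ₗ[MonoidAlgebra k H] M))
    (ιo : (j : ℕ) → Fin (p - 1) → (C (2 * j + 1) →ₗ[MonoidAlgebra k H] M))
    (hdecomp : Function.Bijective
      (DirectSum.toModule (MonoidAlgebra k H) ℕ M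
        (fun j => LinearMap.coprod (ιe j)
          (LinearMap.lsum (MonoidAlgebra k H)
            (fun _ : Fin (p - 1) => C (2 * j + 1)) ℕ (fun t => ιo j t)))))
    (Z : MonoidAlgebra (MonoidAlgebra k H) (Multiplicative (ZMod p)))
    (hZ : Z = MonoidAlgebra.single (Multiplicative.ofAdd (1 : ZMod p))
      (1 : MonoidAlgebra k H) - 1)
    (hZ0 : ∀ m : C (2 * 0), Z • ιe 0 m = 0)
    (hZe : ∀ (j : ℕ) (m : C (2 * (j + 1))),
      Z • ιe (j + 1) m = ιo j ⟨0, by have := hp.two_le; omega⟩ (d (2 * j + 1) m))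
    (hZo : ∀ (j : ℕ) (t : Fin (p - 1)) (ht : (t : ℕ) + 1 < p - 1) (m : C (2 * j + 1)),
      Z • ιo j t m = ιo j ⟨(t : ℕ) + 1, ht⟩ m)
    (hZlast : ∀ (j : ℕ) (hl : p - 2 < p - 1) (m : C (2 * j + 1)),
      Z • ιo j ⟨p - 2, hl⟩ m = ιe j (d (2 * j) m)) :
    Module.Projective (MonoidAlgebra (MonoidAlgebra k H) (Multiplicative (ZMod p))) M := by
  classical
  have hp2 : 2 ≤ p := hp.two_le
  haveI : Fact p.Prime := ⟨hp⟩
  haveI : NeZero p := ⟨hp.pos.ne'⟩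
  -- characteristic facts
  haveI hchR : CharP (MonoidAlgebra k H) p :=
    charP_of_injective_ringHom
      (f := (MonoidAlgebra.singleOneRingHom : k →+* MonoidAlgebra k H))
      (MonoidAlgebra.single_right_injective (m := 1)) p
  haveI hchA : CharP (MonoidAlgebra (MonoidAlgebra k H) (Multiplicative (ZMod p))) p :=
    charP_of_injective_ringHom
      (f := (MonoidAlgebra.singleOneRingHom : MonoidAlgebra k H →+*
        MonoidAlgebra (MonoidAlgebra k H) (Multiplicative (ZMod p))))
      (MonoidAlgebra.single_right_injective (m := 1)) p
  set g : MonoidAlgebra (MonoidAlgebra k H) (Multiplicative (ZMod p)) :=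
    MonoidAlgebra.single (Multiplicative.ofAdd (1 : ZMod p)) (1 : MonoidAlgebra k H) with hgdef
  have hgZ : g = Z + 1 := by rw [hZ, sub_add_cancel]
  have hofAddp : (Multiplicative.ofAdd (1 : ZMod p)) ^ p = 1 := by
    rw [← ofAdd_nsmul]
    simp [nsmul_eq_mul, ZMod.natCast_self]
  have hgp : g ^ p = 1 := by
    rw [hgdef, MonoidAlgebra.single_pow, one_pow, hofAddp, ← MonoidAlgebra.one_def]
  have hZp : Z ^ p = 0 := by
    rw [hZ, sub_pow_char_of_commute p (Commute.one_right g), hgp, one_pow, sub_self]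
  -- commutation of Z with scalars from R
  have hcomm1 : ∀ (r : MonoidAlgebra k H) (a : Multiplicative (ZMod p)),
      MonoidAlgebra.single a (1 : MonoidAlgebra k H) * MonoidAlgebra.single 1 r
        = MonoidAlgebra.single 1 r * MonoidAlgebra.single a (1 : MonoidAlgebra k H) := by
    intro r a
    rw [MonoidAlgebra.single_mul_single, MonoidAlgebra.single_mul_single]
    simp
  have hZr : ∀ r : MonoidAlgebra k H,
      Commute (MonoidAlgebra.single (1 : Multiplicative (ZMod p)) r) Z := by
    intro r
    have : MonoidAlgebra.single (1 : Multiplicative (ZMod p)) r * Z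
        = Z * MonoidAlgebra.single (1 : Multiplicative (ZMod p)) r := by
      rw [hZ, mul_sub, sub_mul, mul_one, one_mul, hcomm1 r]
    exact this
  have hZnr : ∀ (n : ℕ) (r : MonoidAlgebra k H),
      Commute (MonoidAlgebra.single (1 : Multiplicative (ZMod p)) r) (Z ^ n) :=
    fun n r => (hZr r).pow_right n
  -- R-scalars act through A
  have hrA : ∀ (r : MonoidAlgebra k H)
      (a : MonoidAlgebra (MonoidAlgebra k H) (Multiplicative (ZMod p))),
      r • a = MonoidAlgebra.single 1 r * a := by
    intro r a
    ext x a'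
    rw [MonoidAlgebra.coeff_smul_apply, MonoidAlgebra.coeff_single_one_mul, smul_eq_mul]
  have hrsmul : ∀ (r : MonoidAlgebra k H) (m : M),
      r • m = (MonoidAlgebra.single (1 : Multiplicative (ZMod p)) r :
        MonoidAlgebra (MonoidAlgebra k H) (Multiplicative (ZMod p))) • m := by
    intro r m
    conv_lhs => rw [← one_smul (MonoidAlgebra (MonoidAlgebra k H) (Multiplicative (ZMod p))) m,
      ← smul_assoc]
    congr 1
    rw [hrA, mul_one]
  have hZsmul_r : ∀ (n : ℕ) (r : MonoidAlgebra k H) (m : M),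
      Z ^ n • r • m = r • Z ^ n • m := by
    intro n r m
    rw [hrsmul r m, ← mul_smul, ← (hZnr n r).eq, mul_smul, ← hrsmul]
  -- Z^n as an R-linear endomorphism of M
  set ZM : ℕ → M →ₗ[MonoidAlgebra k H] M := fun n =>
    { toFun := fun m => Z ^ n • m
      map_add' := fun m₁ m₂ => smul_add _ m₁ m₂
      map_smul' := fun r m => by
        simp only [RingHom.id_apply]
        exact hZsmul_r n r m } with hZM
  have hZMapp : ∀ (n : ℕ) (m : M), ZM n m = Z ^ n • m := fun n m => rfl
  -- contracting homotopy
  obtain ⟨h, hh0, hh⟩ := exists_homotopy C d hproj hexact hexact0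
  -- the decomposition of M
  set Φ := DirectSum.toModule (MonoidAlgebra k H) ℕ M
      (fun j => LinearMap.coprod (ιe j)
        (LinearMap.lsum (MonoidAlgebra k H)
          (fun _ : Fin (p - 1) => C (2 * j + 1)) ℕ (fun t => ιo j t))) with hΦ
  set eΦ := LinearEquiv.ofBijective Φ hdecomp with heΦ
  have heΦapp : ∀ w, eΦ w = Φ w := fun w => rfl
  have hsymm_e : ∀ (j : ℕ) (x : C (2 * j)), eΦ.symm (ιe j x)
      = DirectSum.lof (MonoidAlgebra k H) ℕ
          (fun j => C (2 * j) × (Fin (p - 1) → C (2 * j + 1))) j (x, 0) := by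
    intro j x
    rw [LinearEquiv.symm_apply_eq, heΦapp, hΦ, DirectSum.toModule_lof]
    simp
  have hsymm_o : ∀ (j : ℕ) (t : Fin (p - 1)) (x : C (2 * j + 1)), eΦ.symm (ιo j t x)
      = DirectSum.lof (MonoidAlgebra k H) ℕ
          (fun j => C (2 * j) × (Fin (p - 1) → C (2 * j + 1))) j (0, Pi.single t x) := by
    intro j t x
    rw [LinearEquiv.symm_apply_eq, heΦapp, hΦ, DirectSum.toModule_lof]
    simp only [LinearMap.coprod_apply, map_zero, zero_add, LinearMap.lsum_apply,
      LinearMap.sum_apply, LinearMap.comp_apply, LinearMap.proj_apply]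
    rw [Finset.sum_eq_single t]
    · simp
    · intro i _ hi
      simp [Pi.single_apply, if_neg hi]
    · intro habs
      exact absurd (Finset.mem_univ t) habs
  -- the R-linear map θ
  set θe : ∀ j : ℕ, C (2 * j) →ₗ[MonoidAlgebra k H] M :=
    fun j => (ιo j ⟨0, by omega⟩) ∘ₗ h (2 * j) with hθedef
  set θo : ∀ (j : ℕ), Fin (p - 1) → (C (2 * j + 1) →ₗ[MonoidAlgebra k H] M) :=
    fun j t => if ((t : ℕ) = p - 2)
      then (LinearMap.comp (ιe (j + 1)) (h (2 * j + 1)) : C (2 * j + 1) →ₗ[MonoidAlgebra k H] M)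
      else 0 with hθodef
  set θ : M →ₗ[MonoidAlgebra k H] M :=
    (DirectSum.toModule (MonoidAlgebra k H) ℕ M
      (fun j => LinearMap.coprod (θe j)
        (LinearMap.lsum (MonoidAlgebra k H)
          (fun _ : Fin (p - 1) => C (2 * j + 1)) ℕ (fun t => θo j t)))) ∘ₗ
      (eΦ.symm : M →ₗ[MonoidAlgebra k H] _) with hθdef
  have hθe : ∀ (j : ℕ) (x : C (2 * j)), θ (ιe j x) = ιo j ⟨0, by omega⟩ (h (2 * j) x) := by
    intro j x
    rw [hθdef]
    simp only [LinearMap.comp_apply, LinearEquiv.coe_coe]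
    rw [hsymm_e, DirectSum.toModule_lof]
    simp [hθedef]
  have hθo : ∀ (j : ℕ) (t : Fin (p - 1)) (x : C (2 * j + 1)),
      θ (ιo j t x) = θo j t x := by
    intro j t x
    rw [hθdef]
    simp only [LinearMap.comp_apply, LinearEquiv.coe_coe]
    rw [hsymm_o, DirectSum.toModule_lof]
    simp only [LinearMap.coprod_apply, map_zero, zero_add, LinearMap.lsum_apply,
      LinearMap.sum_apply, LinearMap.comp_apply, LinearMap.proj_apply]
    rw [Finset.sum_eq_single t]
    · simp
    · intro i _ hi
      simp [Pi.single_apply, if_neg hi]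
    · intro habs
      exact absurd (Finset.mem_univ t) habs
  have hθo_last : ∀ (j : ℕ) (x : C (2 * j + 1)),
      θ (ιo j ⟨p - 2, by omega⟩ x) = ιe (j + 1) (h (2 * j + 1) x) := by
    intro j x
    rw [hθo, hθodef]
    simp only [if_pos rfl]
    exact rfl
  have hθo_mid : ∀ (j : ℕ) (t : Fin (p - 1)) (ht : (t : ℕ) ≠ p - 2) (x : C (2 * j + 1)),
      θ (ιo j t x) = 0 := by
    intro j t ht x
    rw [hθo, hθodef]
    simp [if_neg ht]
  -- powers of Z acting on the generators
  have P1 : ∀ (j tv s u : ℕ) (huv : tv + s = u) (hu : u ≤ p - 2) (htv : tv < p - 1)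
      (x : C (2 * j + 1)), Z ^ s • ιo j ⟨tv, htv⟩ x = ιo j ⟨u, by omega⟩ x := by
    intro j tv s
    induction s with
    | zero =>
      intro u huv hu htv x
      subst huv
      rw [pow_zero, one_smul]
      rfl
    | succ s ih =>
      intro u huv hu htv x
      subst huv
      rw [pow_succ', mul_smul, ih (tv + s) rfl (by omega) htv x,
        hZo j ⟨tv + s, by omega⟩ (show tv + s + 1 < p - 1 by omega) x]
      rfl
  have P2 : ∀ (j tv s : ℕ) (hs : tv + s = p - 1) (htv : tv < p - 1) (x : C (2 * j + 1)),
      Z ^ s • ιo j ⟨tv, htv⟩ x = ιe j (d (2 * j) x) := by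
    intro j tv s hs htv x
    have h1 : s = (p - 2 - tv) + 1 := by omega
    rw [h1, pow_succ', mul_smul, P1 j tv (p - 2 - tv) (p - 2) (by omega) (by omega) htv x,
      hZlast j (by omega) x]
  have P3 : ∀ (j u s : ℕ) (hs : s = u + 1) (hu : u ≤ p - 2) (x : C (2 * (j + 1))),
      Z ^ s • ιe (j + 1) x = ιo j ⟨u, by omega⟩ (d (2 * j + 1) x) := by
    intro j u s hs hu x
    rw [hs, pow_succ, mul_smul, hZe j x, P1 j 0 u u (by omega) hu (by omega) _]
  have P4 : ∀ (s : ℕ) (hs : 1 ≤ s) (x : C (2 * 0)), Z ^ s • ιe 0 x = 0 := by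
    intro s hs x
    obtain ⟨u, rfl⟩ : ∃ u, s = u + 1 := ⟨s - 1, by omega⟩
    rw [pow_succ, mul_smul, hZ0 x, smul_zero]
  have P5 : ∀ (j s : ℕ) (hs1 : 1 ≤ s) (hs2 : s ≤ p - 1) (x : C (2 * j + 1)),
      Z ^ s • ιe j (d (2 * j) x) = 0 := by
    intro j s hs1 hs2 x
    cases j with
    | zero => exact P4 s hs1 (d (2 * 0) x)
    | succ j' =>
      rw [P3 j' (s - 1) s (by omega) (by omega) (d (2 * (j' + 1)) x)]
      have hdd : d (2 * j' + 1) (d (2 * j' + 1 + 1) x) = 0 := by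
        have hmem : d (2 * j' + 1 + 1) x ∈ LinearMap.range (d (2 * j' + 1 + 1)) := ⟨x, rfl⟩
        rw [hexact (2 * j' + 1)] at hmem
        exact hmem
      rw [show (d (2 * j' + 1)) ((d (2 * (j' + 1))) x) = 0 from hdd, map_zero]
  -- the trace identity on generators
  have Te0 : ∀ x : C (2 * 0),
      ∑ i ∈ Finset.range p, Z ^ i • θ (Z ^ (p - 1 - i) • ιe 0 x) = ιe 0 x := by
    intro x
    have hsum := sum_one_term p (p - 1) (by omega)
      (fun i => Z ^ i • θ (Z ^ (p - 1 - i) • ιe 0 x))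
      (ιe 0 x) ?_
    · exact hsum
    intro i hi
    beta_reduce
    by_cases hc : i = p - 1
    · subst hc
      rw [if_pos rfl, show p - 1 - (p - 1) = 0 from by omega, pow_zero, one_smul, hθe 0 x,
        P2 0 0 (p - 1) (by omega) (by omega) _]
      exact congrArg (ιe 0) (hh0 x)
    · rw [if_neg hc, P4 (p - 1 - i) (by omega) x, map_zero, smul_zero]
  have Te1 : ∀ (j : ℕ) (x : C (2 * (j + 1))),
      ∑ i ∈ Finset.range p, Z ^ i • θ (Z ^ (p - 1 - i) • ιe (j + 1) x) = ιe (j + 1) x := by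
    intro j x
    have hsum := sum_two_terms p (p - 1) 0 (by omega) (by omega) (by omega)
      (fun i => Z ^ i • θ (Z ^ (p - 1 - i) • ιe (j + 1) x))
      (ιe (j + 1) (d (2 * (j + 1)) (h (2 * (j + 1)) x)))
      (ιe (j + 1) (h (2 * j + 1) (d (2 * j + 1) x))) ?_
    · rw [hsum, ← map_add]
      exact congrArg (ιe (j + 1)) (hh (2 * j + 1) x)
    intro i hi
    beta_reduce
    by_cases hc1 : i = p - 1
    · subst hc1
      rw [if_pos rfl, if_neg (by omega), add_zero,
        show p - 1 - (p - 1) = 0 from by omega, pow_zero, one_smul, hθe (j + 1) x,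
        P2 (j + 1) 0 (p - 1) (by omega) (by omega) _]
    · by_cases hc2 : i = 0
      · subst hc2
        rw [if_neg (by omega), if_pos rfl, zero_add, pow_zero, one_smul,
          P3 j (p - 2) (p - 1 - 0) (by omega) (by omega) x, hθo_last j _]
      · rw [if_neg hc1, if_neg hc2, add_zero,
          P3 j (p - 1 - i - 1) (p - 1 - i) (by omega) (by omega) x,
          hθo_mid j ⟨p - 1 - i - 1, by omega⟩ (show p - 1 - i - 1 ≠ p - 2 by omega) _,
          smul_zero]
  have To1 : ∀ (j : ℕ) (t : Fin (p - 1)) (x : C (2 * j + 1)),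
      ∑ i ∈ Finset.range p, Z ^ i • θ (Z ^ (p - 1 - i) • ιo j t x) = ιo j t x := by
    intro j t x
    obtain ⟨tv, htv⟩ := t
    have hsum := sum_two_terms p (tv + 1) tv (by omega) (by omega) (by omega)
      (fun i => Z ^ i • θ (Z ^ (p - 1 - i) • ιo j ⟨tv, htv⟩ x))
      (ιo j ⟨tv, htv⟩ (d (2 * j + 1) (h (2 * j + 1) x)))
      (ιo j ⟨tv, htv⟩ (h (2 * j) (d (2 * j) x))) ?_
    · rw [hsum, ← map_add]
      exact congrArg (ιo j ⟨tv, htv⟩) (hh (2 * j) x)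
    intro i hi
    beta_reduce
    by_cases hc1 : i = tv + 1
    · subst hc1
      rw [if_pos rfl, if_neg (by omega), add_zero,
        P1 j tv (p - 1 - (tv + 1)) (p - 2) (by omega) (by omega) htv x,
        hθo_last j x, P3 j tv (tv + 1) rfl (by omega) _]
    · by_cases hc2 : i = tv
      · subst hc2
        rw [if_neg hc1, if_pos rfl, zero_add,
          P2 j i (p - 1 - i) (by omega) htv x, hθe j _,
          P1 j 0 i i (by omega) (by omega) (by omega) _]
      · rw [if_neg hc1, if_neg hc2, add_zero]
        by_cases hc3 : i < tv
        · rw [show p - 1 - i = (tv - i) + (p - 1 - tv) from by omega, pow_add, mul_smul,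
            P2 j tv (p - 1 - tv) (by omega) htv x,
            P5 j (tv - i) (by omega) (by omega) x, map_zero, smul_zero]
        · rw [P1 j tv (p - 1 - i) (tv + (p - 1 - i)) rfl (by omega) htv x,
            hθo_mid j ⟨tv + (p - 1 - i), by omega⟩
              (show tv + (p - 1 - i) ≠ p - 2 by omega) x, smul_zero]
  -- the global trace identity
  set TL : M →ₗ[MonoidAlgebra k H] M :=
    ∑ i ∈ Finset.range p, (ZM i) ∘ₗ (θ ∘ₗ ZM (p - 1 - i)) with hTL
  have hTLapp : ∀ m : M, TL m = ∑ i ∈ Finset.range p, Z ^ i • θ (Z ^ (p - 1 - i) • m) := by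
    intro m
    rw [hTL]
    simp [LinearMap.sum_apply, LinearMap.comp_apply, hZMapp]
  have htrace : ∀ m : M, TL m = m := by
    intro m
    obtain ⟨w, rfl⟩ := hdecomp.surjective m
    induction w using DirectSum.induction_on with
    | zero => simp
    | of j v =>
      rw [← DirectSum.lof_eq_of (MonoidAlgebra k H)]
      have hv : Φ (DirectSum.lof (MonoidAlgebra k H) ℕ
            (fun j => C (2 * j) × (Fin (p - 1) → C (2 * j + 1))) j v)
          = ιe j v.1 + ∑ t : Fin (p - 1), ιo j t (v.2 t) := by
        rw [hΦ, DirectSum.toModule_lof]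
        simp [LinearMap.coprod_apply, LinearMap.lsum_apply, LinearMap.sum_apply]
      rw [hv, map_add, map_sum]
      have h1 : TL (ιe j v.1) = ιe j v.1 := by
        rw [hTLapp]
        cases j with
        | zero => exact Te0 v.1
        | succ j' => exact Te1 j' v.1
      have h2 : ∀ t : Fin (p - 1), TL (ιo j t (v.2 t)) = ιo j t (v.2 t) := by
        intro t
        rw [hTLapp]
        exact To1 j t (v.2 t)
      rw [h1, Finset.sum_congr rfl (fun t _ => h2 t)]
    | add x y hx hy => simp only [map_add, hx, hy]
  -- projectivity of M over the group algebra of H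
  have hD : ∀ j : ℕ, Module.Projective (MonoidAlgebra k H)
      (C (2 * j) × (Fin (p - 1) → C (2 * j + 1))) := by
    intro j
    haveI hds : Module.Projective (MonoidAlgebra k H)
        (DirectSum (Fin (p - 1)) (fun _ => C (2 * j + 1))) :=
      inferInstanceAs (Module.Projective (MonoidAlgebra k H)
        (Π₀ _ : Fin (p - 1), C (2 * j + 1)))
    haveI hpi : Module.Projective (MonoidAlgebra k H) (Fin (p - 1) → C (2 * j + 1)) :=
      Module.Projective.of_equiv
        (DirectSum.linearEquivFunOnFintype (MonoidAlgebra k H) (Fin (p - 1))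
          (fun _ => C (2 * j + 1)))
    infer_instance
  haveI hE : Module.Projective (MonoidAlgebra k H)
      (DirectSum ℕ (fun j => C (2 * j) × (Fin (p - 1) → C (2 * j + 1)))) :=
    inferInstanceAs (Module.Projective (MonoidAlgebra k H)
      (Π₀ j : ℕ, C (2 * j) × (Fin (p - 1) → C (2 * j + 1))))
  have hMproj : Module.Projective (MonoidAlgebra k H) M := Module.Projective.of_equiv eΦ
  obtain ⟨sR, hsR⟩ := Module.projective_def.mp hMproj
  -- the maps (M →₀ R) → (M →₀ A) twisting by powers of Z
  set φA : ℕ → (MonoidAlgebra k H →ₗ[MonoidAlgebra k H]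
      MonoidAlgebra (MonoidAlgebra k H) (Multiplicative (ZMod p))) := fun i =>
    { toFun := fun r => Z ^ i * MonoidAlgebra.single 1 r
      map_add' := fun a b => by
        show Z ^ i * MonoidAlgebra.single 1 (a + b)
          = Z ^ i * MonoidAlgebra.single 1 a + Z ^ i * MonoidAlgebra.single 1 b
        rw [MonoidAlgebra.single_add, mul_add]
      map_smul' := fun r' r => by
        show Z ^ i * MonoidAlgebra.single 1 (r' * r)
          = r' • (Z ^ i * MonoidAlgebra.single 1 r)
        rw [show MonoidAlgebra.single (1 : Multiplicative (ZMod p)) (r' * r)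
            = MonoidAlgebra.single (1 : Multiplicative (ZMod p)) r'
              * MonoidAlgebra.single (1 : Multiplicative (ZMod p)) r by
          rw [MonoidAlgebra.single_mul_single, one_mul],
          hrA, ← mul_assoc, ← (hZnr i r').eq, mul_assoc] } with hφA
  set promote : ℕ → ((M →₀ MonoidAlgebra k H) →ₗ[MonoidAlgebra k H]
      (M →₀ MonoidAlgebra (MonoidAlgebra k H) (Multiplicative (ZMod p)))) :=
    fun i => Finsupp.mapRange.linearMap (φA i) with hpromote
  have hpromote_apply : ∀ (i : ℕ) (v : M →₀ MonoidAlgebra k H) (x : M),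
      promote i v x = Z ^ i * MonoidAlgebra.single 1 (v x) := by
    intro i v x
    show Finsupp.mapRange (φA i) (map_zero _) v x = _
    rw [Finsupp.mapRange_apply]
    rfl
  have hpromote_single : ∀ (i : ℕ) (x : M) (r : MonoidAlgebra k H),
      promote i (Finsupp.single x r)
        = Finsupp.single x (Z ^ i * MonoidAlgebra.single 1 r) := by
    intro i x r
    show Finsupp.mapRange (φA i) (map_zero _) (Finsupp.single x r) = _
    rw [Finsupp.mapRange_single]
    rfl
  have hZpromote : ∀ (i : ℕ) (v : M →₀ MonoidAlgebra k H),
      Z • promote i v = promote (i + 1) v := by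
    intro i v
    refine Finsupp.ext fun x => ?_
    rw [Finsupp.smul_apply, hpromote_apply, hpromote_apply, smul_eq_mul, ← mul_assoc,
      ← pow_succ']
  have hpromote_p : ∀ v : M →₀ MonoidAlgebra k H, promote p v = 0 := by
    intro v
    refine Finsupp.ext fun x => ?_
    rw [hpromote_apply, hZp, zero_mul, Finsupp.coe_zero, Pi.zero_apply]
  -- the section of the free presentation over the big group algebra
  set sLin : M →ₗ[MonoidAlgebra k H]
      (M →₀ MonoidAlgebra (MonoidAlgebra k H) (Multiplicative (ZMod p))) :=
    ∑ i ∈ Finset.range p, (promote i) ∘ₗ (sR ∘ₗ (θ ∘ₗ ZM (p - 1 - i))) with hsLin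
  have hsLinapp : ∀ m : M,
      sLin m = ∑ i ∈ Finset.range p, promote i (sR (θ (Z ^ (p - 1 - i) • m))) := by
    intro m
    rw [hsLin]
    simp [LinearMap.sum_apply, LinearMap.comp_apply, hZMapp]
  have hsLinZ : ∀ m : M, sLin (Z • m) = Z • sLin m := by
    intro m
    set f : ℕ → (M →₀ MonoidAlgebra (MonoidAlgebra k H) (Multiplicative (ZMod p))) :=
      fun i => promote i (sR (θ (Z ^ (p - i) • m))) with hfdef
    have hf0 : f 0 = 0 := by
      rw [hfdef]
      show promote 0 (sR (θ (Z ^ (p - 0) • m))) = 0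
      rw [show p - 0 = p from rfl, hZp, zero_smul, map_zero, map_zero, map_zero]
    have hfp : f p = 0 := by
      rw [hfdef]
      exact hpromote_p _
    calc sLin (Z • m) = ∑ i ∈ Finset.range p, f i := by
          rw [hsLinapp]
          refine Finset.sum_congr rfl (fun i hi => ?_)
          have hexp : Z ^ (p - 1 - i) • Z • m = Z ^ (p - i) • m := by
            rw [← mul_smul, ← pow_succ, show p - 1 - i + 1 = p - i from by
              have := Finset.mem_range.mp hi; omega]
          rw [hexp, hfdef]
      _ = ∑ i ∈ Finset.range (p + 1), f i := by
          rw [Finset.sum_range_succ, hfp, add_zero]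
      _ = ∑ i ∈ Finset.range p, f (i + 1) := by
          rw [Finset.sum_range_succ', hf0, add_zero]
      _ = Z • sLin m := by
          rw [hsLinapp, Finset.smul_sum]
          refine Finset.sum_congr rfl (fun i hi => ?_)
          rw [hZpromote, hfdef]
          show promote (i + 1) (sR (θ (Z ^ (p - (i + 1)) • m)))
            = promote (i + 1) (sR (θ (Z ^ (p - 1 - i) • m)))
          rw [show p - (i + 1) = p - 1 - i from by omega]
  have hsLin_g : ∀ m : M, sLin (g • m) = g • sLin m := by
    intro m
    rw [hgZ, add_smul, one_smul, map_add, hsLinZ, add_smul, one_smul]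
  have hsLin_gn : ∀ (n : ℕ) (m : M), sLin (g ^ n • m) = g ^ n • sLin m := by
    intro n
    induction n with
    | zero => intro m; simp
    | succ n ih =>
      intro m
      rw [pow_succ, mul_smul, ih, hsLin_g, ← mul_smul, ← pow_succ]
  have hrF : ∀ (r : MonoidAlgebra k H)
      (w : M →₀ MonoidAlgebra (MonoidAlgebra k H) (Multiplicative (ZMod p))),
      r • w = (MonoidAlgebra.single (1 : Multiplicative (ZMod p)) r :
        MonoidAlgebra (MonoidAlgebra k H) (Multiplicative (ZMod p))) • w := by
    intro r w
    refine Finsupp.ext fun x => ?_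
    rw [Finsupp.smul_apply, Finsupp.smul_apply, hrA r (w x), smul_eq_mul]
  have hsingle_pow : ∀ n : ℕ, g ^ n
      = MonoidAlgebra.single (Multiplicative.ofAdd ((n : ℕ) : ZMod p))
          (1 : MonoidAlgebra k H) := by
    intro n
    rw [hgdef, MonoidAlgebra.single_pow, one_pow]
    congr 1
    rw [← ofAdd_nsmul]
    congr 1
    rw [nsmul_eq_mul, mul_one]
  have hsingle_c : ∀ c : Multiplicative (ZMod p),
      MonoidAlgebra.single c (1 : MonoidAlgebra k H)
        = g ^ ((Multiplicative.toAdd c).val) := by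
    intro c
    rw [hsingle_pow ((Multiplicative.toAdd c).val)]
    congr 1
    rw [ZMod.natCast_rightInverse (Multiplicative.toAdd c), ofAdd_toAdd]
  have hAsmul : ∀ (a : MonoidAlgebra (MonoidAlgebra k H) (Multiplicative (ZMod p))) (m : M),
      sLin (a • m) = a • sLin m := by
    intro a m
    induction a using MonoidAlgebra.induction_linear with
    | zero => rw [zero_smul, map_zero, zero_smul]
    | add f1 f2 hf1 hf2 => rw [add_smul, map_add, hf1, hf2, add_smul]
    | single c r =>
      have h1 : (MonoidAlgebra.single c r :
          MonoidAlgebra (MonoidAlgebra k H) (Multiplicative (ZMod p)))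
          = MonoidAlgebra.single (1 : Multiplicative (ZMod p)) r
            * MonoidAlgebra.single c (1 : MonoidAlgebra k H) := by
        rw [MonoidAlgebra.single_mul_single, mul_one, one_mul]
      rw [h1, mul_smul, ← hrsmul, LinearMap.map_smul, hsingle_c, hsLin_gn, ← hsingle_c,
        mul_smul, ← hrF]
  set sA : M →ₗ[MonoidAlgebra (MonoidAlgebra k H) (Multiplicative (ZMod p))]
      (M →₀ MonoidAlgebra (MonoidAlgebra k H) (Multiplicative (ZMod p))) :=
    { toFun := sLin
      map_add' := map_add sLin
      map_smul' := fun a m => by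
        simp only [RingHom.id_apply]
        exact hAsmul a m } with hsAdef
  set π := Finsupp.linearCombination
    (MonoidAlgebra (MonoidAlgebra k H) (Multiplicative (ZMod p))) (id : M → M) with hπ
  have hπpromote : ∀ (i : ℕ) (v : M →₀ MonoidAlgebra k H),
      π (promote i v)
        = Z ^ i • (Finsupp.linearCombination (MonoidAlgebra k H) (id : M → M) v) := by
    intro i v
    induction v using Finsupp.induction_linear with
    | zero => rw [map_zero, map_zero, map_zero, smul_zero]
    | add f1 f2 hf1 hf2 => rw [map_add, map_add, hf1, hf2, map_add, smul_add]
    | single x r =>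
      rw [hpromote_single, hπ, Finsupp.linearCombination_single,
        Finsupp.linearCombination_single, id_eq, mul_smul, ← hrsmul]
  have hπs : ∀ m : M, π (sA m) = m := by
    intro m
    show π (sLin m) = m
    rw [hsLinapp, map_sum,
      Finset.sum_congr rfl (fun i _ => hπpromote i (sR (θ (Z ^ (p - 1 - i) • m)))),
      Finset.sum_congr rfl (fun i (_ : i ∈ Finset.range p) => by
        rw [hsR (θ (Z ^ (p - 1 - i) • m))]),
      ← hTLapp]
    exact htrace m
  exact Module.Projective.of_split sA π (LinearMap.ext hπs)
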